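/- Let K be a valued field whose residue field k has more than n elements, and let ρ₁, …, ρₙ ∈ Λ with each ρᵢ > 1. Then inside the unit ball O = B(0,1) there exist n pairwise disjoint closed balls B₁, …, Bₙ ⊆ O with d(O, Bᵢ) = ρᵢ for all i, where for B' ⊆ B the distance d(B,B') is the ratio radius(B)/radius(B'); equivalently, Bᵢ has radius ρᵢ^{−1} and any two of the Bᵢ are disjoint. -/
import Mathlib

open IsLocalRing in
lemma val_eq_one_of_residue_ne {K Γ₀ : Type*} [Field K]
    [LinearOrderedCommGroupWithZero Γ₀] (v : Valuation K Γ₀)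
    (a b : v.valuationSubring)
    (h : residue v.valuationSubring a ≠ residue v.valuationSubring b) :
    v ((a : K) - b) = 1 := by
  have hmem : a - b ∉ maximalIdeal v.valuationSubring := by
    intro hm
    exact h (Ideal.Quotient.eq.mpr hm)
  rw [mem_maximalIdeal, mem_nonunits_iff, not_not] at hmem
  obtain ⟨u, hu⟩ := hmem
  have h1 : v ((a : K) - b) ≤ 1 := (a - b).2
  have h2 : v (((u⁻¹ : v.valuationSubringˣ) : v.valuationSubring) : K) ≤ 1 :=
    ((u⁻¹ : v.valuationSubringˣ) : v.valuationSubring).2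
  have hprod : v ((a : K) - b) * v (((u⁻¹ : v.valuationSubringˣ) : v.valuationSubring) : K) = 1 := by
    rw [← v.map_mul]
    have : ((a : K) - b) * (((u⁻¹ : v.valuationSubringˣ) : v.valuationSubring) : K)
        = (((u * u⁻¹ : v.valuationSubringˣ) : v.valuationSubring) : K) := by
      push_cast [hu]
      ring
    rw [this, mul_inv_cancel]
    simp
  refine le_antisymm h1 ?_
  by_contra hlt
  push_neg at hlt
  have := mul_lt_one_of_lt_of_le hlt h2
  rw [hprod] at this
  exact absurd this (lt_irrefl 1)

theorem stmt_17 {K Γ₀ : Type*} [Field K] [LinearOrderedCommGroupWithZero Γ₀]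
    (v : Valuation K Γ₀) {n : ℕ} (ρ : Fin n → Γ₀) (hρ : ∀ i, 1 < ρ i)
    (hk : (n : Cardinal) < Cardinal.mk (IsLocalRing.ResidueField v.valuationSubring)) :
    ∃ p : Fin n → K, (∀ i, v (p i) ≤ 1) ∧
      (∀ i, {y : K | v (y - p i) ≤ (ρ i)⁻¹} ⊆ {y : K | v y ≤ 1}) ∧
      ∀ i j, i ≠ j →
        Disjoint {y : K | v (y - p i) ≤ (ρ i)⁻¹} {y : K | v (y - p j) ≤ (ρ j)⁻¹} := by
  have hle : (Cardinal.mk (ULift (Fin n))) ≤ Cardinal.mk (IsLocalRing.ResidueField v.valuationSubring) := by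
    simpa using hk.le
  obtain ⟨f⟩ := Cardinal.le_def _ _ |>.mp hle
  have hsurj := IsLocalRing.residue_surjective (R := v.valuationSubring)
  choose q hq using fun i : Fin n => hsurj (f ⟨i⟩)
  refine ⟨fun i => (q i : K), fun i => (q i).2, ?_, ?_⟩
  · intro i y hy
    have hρi : (ρ i)⁻¹ ≤ 1 := le_of_lt ((inv_lt_one₀ (zero_lt_one.trans (hρ i))).mpr (hρ i))
    have : v y ≤ max (v (y - q i)) (v (q i : K)) := by
      simpa using v.map_add (y - q i) (q i)
    exact le_trans this (max_le (le_trans hy hρi) (q i).2)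
  · intro i j hij
    rw [Set.disjoint_left]
    intro y hyi hyj
    have hres : IsLocalRing.residue v.valuationSubring (q i)
        ≠ IsLocalRing.residue v.valuationSubring (q j) := by
      rw [hq i, hq j]
      exact fun h => hij (congrArg ULift.down (f.injective h))
    have h1 : v ((q i : K) - q j) = 1 := val_eq_one_of_residue_ne v _ _ hres
    have : v ((q i : K) - q j) ≤ max (v ((q i : K) - y)) (v (y - q j)) := by
      have := v.map_add ((q i : K) - y) (y - q j)
      simpa using this
    rw [v.map_sub_swap (q i : K) y] at this
    have hlt : v ((q i : K) - q j) < 1 := by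
      refine lt_of_le_of_lt this (max_lt ?_ ?_)
      · exact lt_of_le_of_lt hyi ((inv_lt_one₀ (zero_lt_one.trans (hρ i))).mpr (hρ i))
      · exact lt_of_le_of_lt hyj ((inv_lt_one₀ (zero_lt_one.trans (hρ j))).mpr (hρ j))
    rw [h1] at hlt
    exact absurd hlt (lt_irrefl 1)
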